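/- Let G be a finite abelian p-group and S a finite abelian p-group. Then the number of pairs (H,K) of subgroups of G with H ≤ K and K/H ≅ S equals the sum over all subgroups T of G with T ≅ S of the number of subgroups of G/T. -/

import Mathlib

namespace Stmt7Aux

noncomputable section

open AddSubgroup

/-- The character dual of an additive group. -/
abbrev Dl (A : Type*) [AddCommGroup A] := A →+ Additive ℂˣ

variable {A : Type*} [AddCommGroup A]

lemma dualEquiv (A : Type*) [AddCommGroup A] [Finite A] : Nonempty (Dl A ≃+ A) := by
  haveI : NeZero ((Monoid.exponent (Multiplicative A) : ℂ)) :=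
    ⟨by exact_mod_cast (Monoid.exponent_ne_zero_of_finite (G := Multiplicative A))⟩
  obtain ⟨e⟩ := CommGroup.monoidHom_mulEquiv_of_hasEnoughRootsOfUnity (Multiplicative A) ℂ
  refine ⟨AddEquiv.mk' ((AddMonoidHom.toMultiplicativeLeft.trans e.toEquiv).trans
    Multiplicative.toAdd) ?_⟩
  intro f g
  show Multiplicative.toAdd (e (AddMonoidHom.toMultiplicativeLeft (f + g))) = _
  have : AddMonoidHom.toMultiplicativeLeft (f + g)
      = AddMonoidHom.toMultiplicativeLeft f * AddMonoidHom.toMultiplicativeLeft g := rfl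
  rw [this, map_mul]
  rfl

lemma exists_ne (A : Type*) [AddCommGroup A] [Finite A] {a : A} (ha : a ≠ 0) :
    ∃ φ : Dl A, φ a ≠ 0 := by
  haveI : NeZero ((Monoid.exponent (Multiplicative A) : ℂ)) :=
    ⟨by exact_mod_cast (Monoid.exponent_ne_zero_of_finite (G := Multiplicative A))⟩
  obtain ⟨φ, hφ⟩ := CommGroup.exists_apply_ne_one_of_hasEnoughRootsOfUnity
    (Multiplicative A) ℂ (a := Multiplicative.ofAdd a) (by simpa using ha)
  exact ⟨AddMonoidHom.toMultiplicativeLeft.symm φ, by simpa using hφ⟩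

/-- Annihilator of a subgroup in the dual. -/
def ann (H : AddSubgroup A) : AddSubgroup (Dl A) where
  carrier := {φ | ∀ a ∈ H, φ a = 0}
  zero_mem' := fun a _ => rfl
  add_mem' := by intro φ ψ hφ hψ a ha; simp [AddMonoidHom.add_apply, hφ a ha, hψ a ha]
  neg_mem' := by intro φ hφ a ha; simp [AddMonoidHom.neg_apply, hφ a ha]

lemma mem_ann {H : AddSubgroup A} {φ : Dl A} : φ ∈ ann H ↔ ∀ a ∈ H, φ a = 0 := Iff.rfl

/-- The annihilator is isomorphic to the dual of the quotient. -/
def annEquiv (H : AddSubgroup A) : Dl (A ⧸ H) ≃+ ann H where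
  toFun ψ := ⟨ψ.comp (QuotientAddGroup.mk' H), fun a ha => by
    show ψ (QuotientAddGroup.mk' H a) = 0
    rw [show (QuotientAddGroup.mk' H a) = 0 from (QuotientAddGroup.eq_zero_iff a).mpr ha,
      map_zero]⟩
  invFun φ := QuotientAddGroup.lift H φ.1 (fun a ha => φ.2 a ha)
  left_inv ψ := by
    ext x
    rfl
  right_inv φ := by ext a; rfl
  map_add' ψ χ := by ext a; rfl

lemma ann_iso (A : Type*) [AddCommGroup A] [Finite A] (H : AddSubgroup A) :
    Nonempty ((ann H : AddSubgroup (Dl A)) ≃+ (A ⧸ H)) := by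
  obtain ⟨e⟩ := dualEquiv (A ⧸ H)
  exact ⟨((annEquiv H).symm.trans e : (ann H : AddSubgroup (Dl A)) ≃+ (A ⧸ H))⟩

lemma sep' [Finite A] (H : AddSubgroup A) {a : A} (ha : a ∉ H) :
    ∃ φ ∈ ann H, φ a ≠ 0 := by
  have h0 : (QuotientAddGroup.mk' H a : A ⧸ H) ≠ 0 := by
    simpa [QuotientAddGroup.eq_zero_iff] using ha
  obtain ⟨ψ, hψ⟩ := exists_ne (A ⧸ H) h0
  exact ⟨(annEquiv H ψ).1, (annEquiv H ψ).2, hψ⟩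

lemma mem_iff_ann [Finite A] {H : AddSubgroup A} {a : A} :
    a ∈ H ↔ ∀ φ ∈ ann H, φ a = 0 := by
  constructor
  · exact fun ha φ hφ => hφ a ha
  · intro h
    by_contra ha
    obtain ⟨φ, hφ, hφa⟩ := sep' H ha
    exact hφa (h φ hφ)

lemma ann_injective [Finite A] : Function.Injective (ann (A := A)) := by
  intro H K h
  ext a
  rw [mem_iff_ann, mem_iff_ann, h]

/-- Evaluation into the double dual. -/
def ev : A →+ Dl (Dl A) where
  toFun a := { toFun := fun φ => φ a, map_zero' := rfl, map_add' := fun φ ψ => rfl }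
  map_zero' := by ext φ; exact congrArg (fun x => ((Additive.toMul x : ℂˣ) : ℂ)) φ.map_zero
  map_add' a b := by ext φ; exact congrArg (fun x => ((Additive.toMul x : ℂˣ) : ℂ)) (φ.map_add a b)

lemma ev_injective [Finite A] : Function.Injective (ev (A := A)) := by
  intro a b h
  rw [← sub_eq_zero]
  by_contra h'
  obtain ⟨φ, hφ⟩ := exists_ne A h'
  apply hφ
  have hb : φ a = φ b := DFunLike.congr_fun h φ
  rw [map_sub, hb, sub_self]

lemma ev_bijective [Finite A] : Function.Bijective (ev (A := A)) := by
  haveI : Finite (Dl A) := Finite.of_equiv A (dualEquiv A).some.toEquiv.symm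
  haveI : Finite (Dl (Dl A)) := Finite.of_equiv (Dl A) (dualEquiv (Dl A)).some.toEquiv.symm
  refine (Nat.bijective_iff_injective_and_card _).mpr ⟨ev_injective, ?_⟩
  rw [Nat.card_congr (dualEquiv (Dl A)).some.toEquiv, Nat.card_congr (dualEquiv A).some.toEquiv]

lemma ann_surjective [Finite A] : Function.Surjective (ann (A := A)) := by
  haveI : Finite (Dl A) := Finite.of_equiv A (dualEquiv A).some.toEquiv.symm
  intro N
  refine ⟨(ann N).comap (ev (A := A)), le_antisymm ?_ ?_⟩
  · -- ann H ≤ N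
    intro φ hφ
    by_contra hφN
    obtain ⟨ξ, hξmem, hξ⟩ := sep' N hφN
    obtain ⟨a, rfl⟩ := ev_bijective.2 ξ
    exact hξ (hφ a (by simpa [AddSubgroup.mem_comap] using hξmem))
  · intro φ hφ a ha
    rw [AddSubgroup.mem_comap, mem_ann] at ha
    exact ha φ hφ

end

end Stmt7Aux
namespace Stmt7Aux

noncomputable section

open AddSubgroup

variable {A : Type*} [AddCommGroup A]

/-- Transport of subgroup lattices along an `AddEquiv`. -/
def mapEquivSub {A B : Type*} [AddCommGroup A] [AddCommGroup B] (e : A ≃+ B) :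
    AddSubgroup A ≃ AddSubgroup B where
  toFun N := N.map (e : A →+ B)
  invFun N := N.map (e.symm : B →+ A)
  left_inv N := SetLike.coe_injective <| by
    simp [AddSubgroup.coe_map, Set.image_image]
  right_inv N := SetLike.coe_injective <| by
    simp [AddSubgroup.coe_map, Set.image_image]

lemma key (S : Type*) [AddCommGroup S] (A : Type*) [AddCommGroup A] [Finite A] :
    Nat.card {H : AddSubgroup A // Nonempty ((A ⧸ H) ≃+ S)}
      = Nat.card {H : AddSubgroup A // Nonempty (H ≃+ S)} := by
  haveI : Finite (Dl A) := Finite.of_equiv A (dualEquiv A).some.toEquiv.symm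
  let e : Dl A ≃+ A := (dualEquiv A).some
  have e1 : {H : AddSubgroup A // Nonempty ((A ⧸ H) ≃+ S)}
      ≃ {N : AddSubgroup (Dl A) // Nonempty (N ≃+ S)} :=
    Equiv.subtypeEquiv (Equiv.ofBijective ann ⟨ann_injective, ann_surjective⟩) (fun H => by
      obtain ⟨g⟩ := ann_iso A H
      exact ⟨fun ⟨f⟩ => ⟨g.trans f⟩, fun ⟨f⟩ => ⟨g.symm.trans f⟩⟩)
  have e2 : {N : AddSubgroup (Dl A) // Nonempty (N ≃+ S)}
      ≃ {H : AddSubgroup A // Nonempty (H ≃+ S)} :=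
    Equiv.subtypeEquiv (mapEquivSub e) (fun N =>
      ⟨fun ⟨f⟩ => ⟨((e.addSubgroupMap N).symm.trans f : (mapEquivSub e N) ≃+ S)⟩,
       fun ⟨f⟩ => ⟨((e.addSubgroupMap N).trans f : (N : AddSubgroup (Dl A)) ≃+ S)⟩⟩)
  exact Nat.card_congr (e1.trans e2)

/-- Correspondence between subgroups of `G ⧸ T` and subgroups containing `T`. -/
def corr {G : Type*} [AddCommGroup G] (T : AddSubgroup G) :
    AddSubgroup (G ⧸ T) ≃ {K : AddSubgroup G // T ≤ K} where
  toFun N := ⟨N.comap (QuotientAddGroup.mk' T), fun t ht => by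
    have h0 : ((QuotientAddGroup.mk' T) t) = 0 := (QuotientAddGroup.eq_zero_iff t).mpr ht
    simpa [AddSubgroup.mem_comap, h0] using N.zero_mem⟩
  invFun K := K.1.map (QuotientAddGroup.mk' T)
  left_inv N := AddSubgroup.map_comap_eq_self_of_surjective
    (QuotientAddGroup.mk'_surjective T) N
  right_inv K := Subtype.ext (by
    show (K.1.map (QuotientAddGroup.mk' T)).comap (QuotientAddGroup.mk' T) = K.1
    rw [AddSubgroup.comap_map_eq, QuotientAddGroup.ker_mk', sup_of_le_left K.2])

lemma map_addSubgroupOf {G : Type*} [AddCommGroup G] (K : AddSubgroup G)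
    (H' : AddSubgroup K) : (H'.map K.subtype).addSubgroupOf K = H' := by
  rw [← AddSubgroup.comap_subtype, AddSubgroup.comap_map_eq, AddSubgroup.ker_subtype,
    sup_bot_eq]

lemma addSubgroupOf_map {G : Type*} [AddCommGroup G] {K H : AddSubgroup G} (h : H ≤ K) :
    (H.addSubgroupOf K).map K.subtype = H := by
  rw [AddSubgroup.addSubgroupOf_map_subtype, inf_eq_left.mpr h]

variable (G S : Type*) [AddCommGroup G] [AddCommGroup S]

def fib1 (K : AddSubgroup G) :
    {H : AddSubgroup G // H ≤ K ∧ Nonempty ((K ⧸ H.addSubgroupOf K) ≃+ S)}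
      ≃ {H' : AddSubgroup K // Nonempty ((K ⧸ H') ≃+ S)} where
  toFun H := ⟨H.1.addSubgroupOf K, H.2.2⟩
  invFun H' := ⟨H'.1.map K.subtype, AddSubgroup.map_subtype_le _, by
    rw [map_addSubgroupOf]; exact H'.2⟩
  left_inv H := Subtype.ext (addSubgroupOf_map H.2.1)
  right_inv H' := Subtype.ext (map_addSubgroupOf K H'.1)

def fib2 (K : AddSubgroup G) :
    {T : AddSubgroup G // Nonempty (T ≃+ S) ∧ T ≤ K}
      ≃ {T' : AddSubgroup K // Nonempty (T' ≃+ S)} where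
  toFun T := ⟨T.1.addSubgroupOf K, T.2.1.elim fun f =>
    ⟨(AddSubgroup.addSubgroupOfEquivOfLe T.2.2).trans f⟩⟩
  invFun T' := ⟨T'.1.map K.subtype, T'.2.elim fun f =>
    ⟨((AddSubgroup.equivMapOfInjective T'.1 K.subtype K.subtype_injective).symm.trans f :
      (T'.1.map K.subtype : AddSubgroup G) ≃+ S)⟩, AddSubgroup.map_subtype_le _⟩
  left_inv T := Subtype.ext (addSubgroupOf_map T.2.2)
  right_inv T' := Subtype.ext (map_addSubgroupOf K T'.1)

def sig1 :
    {HK : AddSubgroup G × AddSubgroup G |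
        HK.1 ≤ HK.2 ∧ Nonempty ((HK.2 ⧸ HK.1.addSubgroupOf HK.2) ≃+ S)}
      ≃ Σ K : AddSubgroup G,
          {H : AddSubgroup G // H ≤ K ∧ Nonempty ((K ⧸ H.addSubgroupOf K) ≃+ S)} where
  toFun p := ⟨p.1.2, p.1.1, p.2⟩
  invFun s := ⟨(s.2.1, s.1), s.2.2⟩
  left_inv p := rfl
  right_inv s := rfl

def sig2 :
    {TK : AddSubgroup G × AddSubgroup G // Nonempty (TK.1 ≃+ S) ∧ TK.1 ≤ TK.2}
      ≃ Σ K : AddSubgroup G,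
          {T : AddSubgroup G // Nonempty (T ≃+ S) ∧ T ≤ K} where
  toFun p := ⟨p.1.2, p.1.1, p.2⟩
  invFun s := ⟨(s.2.1, s.1), s.2.2⟩
  left_inv p := rfl
  right_inv s := rfl

def sig3 :
    {TK : AddSubgroup G × AddSubgroup G // Nonempty (TK.1 ≃+ S) ∧ TK.1 ≤ TK.2}
      ≃ Σ T : {T : AddSubgroup G // Nonempty (T ≃+ S)},
          {K : AddSubgroup G // T.1 ≤ K} where
  toFun p := ⟨⟨p.1.1, p.2.1⟩, p.1.2, p.2.2⟩
  invFun s := ⟨(s.1.1, s.2.1), s.1.2, s.2.2⟩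
  left_inv p := rfl
  right_inv s := rfl

end

end Stmt7Aux
theorem stmt7 (G S : Type*) [AddCommGroup G] [AddCommGroup S] [Finite G] [Finite S]
    (p : ℕ) (hp : p.Prime)
    (hG : ∃ n : ℕ, Nat.card G = p ^ n) (hS : ∃ n : ℕ, Nat.card S = p ^ n) :
    Nat.card {HK : AddSubgroup G × AddSubgroup G |
        HK.1 ≤ HK.2 ∧ Nonempty ((HK.2 ⧸ HK.1.addSubgroupOf HK.2) ≃+ S)} =
      ∑ᶠ T ∈ {T : AddSubgroup G | Nonempty (T ≃+ S)},
        Nat.card (AddSubgroup (G ⧸ T)) := by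
  classical
  haveI : Finite (AddSubgroup G) :=
    Finite.of_injective (fun H : AddSubgroup G => (H : Set G)) SetLike.coe_injective
  have hL : Nat.card {HK : AddSubgroup G × AddSubgroup G |
        HK.1 ≤ HK.2 ∧ Nonempty ((HK.2 ⧸ HK.1.addSubgroupOf HK.2) ≃+ S)}
      = Nat.card {TK : AddSubgroup G × AddSubgroup G //
          Nonempty (TK.1 ≃+ S) ∧ TK.1 ≤ TK.2} := by
    refine Nat.card_congr ((Stmt7Aux.sig1 G S).trans
      ((Equiv.sigmaCongrRight fun K => ?_).trans (Stmt7Aux.sig2 G S).symm))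
    refine (Finite.card_eq.mp ?_).some
    rw [Nat.card_congr (Stmt7Aux.fib1 G S K), Stmt7Aux.key S K,
      ← Nat.card_congr (Stmt7Aux.fib2 G S K)]
  rw [hL]
  letI : Fintype (AddSubgroup G) := Fintype.ofFinite _
  have hfin : {T : AddSubgroup G | Nonempty (T ≃+ S)}.Finite := Set.toFinite _
  rw [finsum_mem_eq_finite_toFinset_sum _ hfin]
  rw [Nat.card_congr (Stmt7Aux.sig3 G S), Nat.card_eq_fintype_card, Fintype.card_sigma]
  rw [← Finset.sum_coe_sort hfin.toFinset]
  refine (Fintype.sum_equiv (Equiv.subtypeEquivRight fun T => hfin.mem_toFinset) _ _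
    fun T => ?_).symm
  rw [← Nat.card_eq_fintype_card]
  exact Nat.card_congr (Stmt7Aux.corr _)
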